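/- Let C ⊂ V be a proper closed convex full-dimensional cone, s > 1, and let f ∈ HConc_s(C), i.e., f : C → ℝ is upper semicontinuous, homogeneous of weight s, strictly positive on C°, and satisfies f(v+x)^{1/s} ≥ f(v)^{1/s} + f(x)^{1/s} for all v, x ∈ C. Then the double polar transform satisfies H(Hf) = f on C, where H is the polar transform (with exponent s on C and exponent s/(s-1) on C*). -/

import Mathlib

open Set Topology

variable {V : Type*} [NormedAddCommGroup V] [NormedSpace ℝ V] [FiniteDimensional ℝ V]

section auxgen
variable {W : Type*} [NormedAddCommGroup W] [NormedSpace ℝ W]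

lemma aux_add_interior {s : Set W} (hadd : ∀ a ∈ s, ∀ b ∈ s, a + b ∈ s)
    {x y : W} (hx : x ∈ interior s) (hy : y ∈ s) : x + y ∈ interior s := by
  obtain ⟨ε, hε, hball⟩ := Metric.mem_nhds_iff.mp (mem_interior_iff_mem_nhds.mp hx)
  refine mem_interior_iff_mem_nhds.mpr (Metric.mem_nhds_iff.mpr ⟨ε, hε, fun z hz => ?_⟩)
  have h1 : z - y ∈ Metric.ball x ε := by
    simp only [Metric.mem_ball] at hz ⊢
    calc dist (z - y) x = dist z (x + y) := by
          rw [dist_eq_norm, dist_eq_norm]; congr 1; abel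
    _ < ε := hz
  have := hadd _ (hball h1) y hy
  simpa using this

lemma aux_smul_interior {s : Set W} (hcone : ∀ a ∈ s, ∀ t : ℝ, 0 ≤ t → t • a ∈ s)
    {x : W} {t : ℝ} (ht : 0 < t) (hx : x ∈ interior s) : t • x ∈ interior s := by
  obtain ⟨ε, hε, hball⟩ := Metric.mem_nhds_iff.mp (mem_interior_iff_mem_nhds.mp hx)
  refine mem_interior_iff_mem_nhds.mpr (Metric.mem_nhds_iff.mpr ⟨t * ε, by positivity, fun z hz => ?_⟩)
  have h1 : t⁻¹ • z ∈ Metric.ball x ε := by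
    simp only [Metric.mem_ball] at hz ⊢
    have h2 : t⁻¹ • z - x = t⁻¹ • (z - t • x) := by
      rw [smul_sub, smul_smul, inv_mul_cancel₀ ht.ne', one_smul]
    rw [dist_eq_norm, h2, norm_smul, Real.norm_eq_abs, abs_of_pos (by positivity)]
    rw [dist_eq_norm] at hz
    calc t⁻¹ * ‖z - t • x‖ < t⁻¹ * (t * ε) := by
          exact mul_lt_mul_of_pos_left hz (by positivity)
    _ = ε := by field_simp
  have := hcone _ (hball h1) t ht.le
  rwa [smul_smul, mul_inv_cancel₀ ht.ne', one_smul] at this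

lemma aux_cone_sep_nonpos {K : Set W} (hK : ∀ a ∈ K, ∀ t : ℝ, 0 ≤ t → t • a ∈ K)
    {φ : W →L[ℝ] ℝ} {u : ℝ} (h : ∀ a ∈ K, φ a < u) : ∀ a ∈ K, φ a ≤ 0 := by
  intro a ha
  by_contra hc; push_neg at hc
  have hu0 : (0:ℝ) < u := hc.trans (h a ha)
  have h2 := h _ (hK a ha ((u + 1) / φ a) (by positivity))
  rw [map_smul, smul_eq_mul, div_mul_cancel₀ _ hc.ne'] at h2
  linarith

end auxgen

/-- The dual cone of `C` inside the continuous dual of `V`. -/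
def dualCone (C : Set V) : Set (V →L[ℝ] ℝ) := {w | ∀ v ∈ C, 0 ≤ w v}

omit [FiniteDimensional ℝ V] in
lemma aux_mem_of_dual (C : Set V) (hCcl : IsClosed C) (hCcv : Convex ℝ C)
    (hCcone : ∀ v ∈ C, ∀ t : ℝ, 0 ≤ t → t • v ∈ C) (h0 : (0 : V) ∈ C)
    {v : V} (hv : ∀ w ∈ dualCone C, 0 ≤ w v) : v ∈ C := by
  by_contra hvC
  obtain ⟨φ, u, hφ, hu⟩ := geometric_hahn_banach_closed_point hCcv hCcl hvC
  have hu0 : 0 < u := by have := hφ 0 h0; simpa using this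
  have hneg := aux_cone_sep_nonpos hCcone hφ
  have hwD : (-φ) ∈ dualCone C := fun a ha => by
    simpa using hneg a ha
  have := hv _ hwD
  simp only [ContinuousLinearMap.neg_apply] at this
  linarith

lemma aux_dual_int_nonempty (C : Set V) (hCcl : IsClosed C) (hCcv : Convex ℝ C)
    (hCcone : ∀ v ∈ C, ∀ t : ℝ, 0 ≤ t → t • v ∈ C)
    (hCproper : ∀ v ∈ C, -v ∈ C → v = 0) (h0 : (0 : V) ∈ C) :
    (interior (dualCone C)).Nonempty := by
  have hDcv : Convex ℝ (dualCone C) := by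
    intro w1 h1 w2 h2 a b ha hb _
    intro x hx
    simp only [ContinuousLinearMap.add_apply, ContinuousLinearMap.coe_smul', Pi.smul_apply,
      smul_eq_mul]
    have := h1 x hx; have := h2 x hx
    positivity
  rw [hDcv.interior_nonempty_iff_affineSpan_eq_top]
  have h0D : (0 : V →L[ℝ] ℝ) ∈ dualCone C := fun x _ => le_refl _
  rw [AffineSubspace.affineSpan_eq_top_iff_vectorSpan_eq_top_of_nonempty ℝ (V →L[ℝ] ℝ)
    (V →L[ℝ] ℝ) ⟨0, h0D⟩]
  have hspan : Submodule.span ℝ (dualCone C) = ⊤ := by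
    by_contra hne
    obtain ⟨ψ, hψne, hψ⟩ := Submodule.exists_dual_map_eq_bot_of_lt_top
      (lt_top_iff_ne_top.mpr hne) inferInstance
    set ev : V →ₗ[ℝ] Module.Dual ℝ (V →L[ℝ] ℝ) := (ContinuousLinearMap.coeLM ℝ).flip with hev
    have hev_apply : ∀ (a : V) (g : V →L[ℝ] ℝ), ev a g = g a := fun a g => rfl
    have hinj : Function.Injective ev := by
      rw [← LinearMap.ker_eq_bot, LinearMap.ker_eq_bot']
      intro a ha
      by_contra hne'
      obtain ⟨g, _, hg⟩ := exists_dual_vector ℝ a (norm_ne_zero_iff.mpr hne')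
      have h1 : ev a g = 0 := by rw [ha]; rfl
      rw [hev_apply] at h1
      rw [h1] at hg
      exact hne' (norm_eq_zero.mp (by exact_mod_cast hg.symm))
    have hfr : Module.finrank ℝ V = Module.finrank ℝ (Module.Dual ℝ (V →L[ℝ] ℝ)) := by
      rw [Subspace.dual_finrank_eq,
        ← (LinearMap.toContinuousLinearMap : (V →ₗ[ℝ] ℝ) ≃ₗ[ℝ] (V →L[ℝ] ℝ)).finrank_eq,
        Subspace.dual_finrank_eq]
    let e := LinearMap.linearEquivOfInjective ev hinj hfr
    have he : ∀ x, e x = ev x := fun x => LinearMap.linearEquivOfInjective_apply hinj hfr x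
    set v := e.symm ψ with hv
    have hψv : ∀ w : V →L[ℝ] ℝ, ψ w = w v := by
      intro w
      have : e v = ψ := e.apply_symm_apply ψ
      rw [he] at this
      rw [← this, hev_apply]
    have hker : ∀ w ∈ dualCone C, w v = 0 := by
      intro w hw
      have hmem : ψ w ∈ Submodule.map ψ (Submodule.span ℝ (dualCone C)) :=
        Submodule.mem_map_of_mem (Submodule.subset_span hw)
      rw [hψ] at hmem
      rw [← hψv]
      simpa using hmem
    have hv1 : v ∈ C := aux_mem_of_dual C hCcl hCcv hCcone h0
      (fun w hw => le_of_eq (hker w hw).symm)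
    have hv2 : -v ∈ C := aux_mem_of_dual C hCcl hCcv hCcone h0
      (fun w hw => by rw [map_neg, hker w hw, neg_zero])
    have hv0 : v = 0 := hCproper v hv1 hv2
    apply hψne
    have : e v = ψ := e.apply_symm_apply ψ
    rw [hv0] at this
    rw [← this, map_zero]
  rw [eq_top_iff, ← hspan]
  rw [Submodule.span_le]
  intro w hw
  have := vsub_mem_vectorSpan ℝ hw h0D
  simpa using this

/-- The polar transform of a weight-`s` homogeneous function `f` on the cone `C`. -/
noncomputable def polar (C : Set V) (s : ℝ) (f : V → ℝ) (w : V →L[ℝ] ℝ) : ℝ :=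
  sInf ((fun v => (w v / f v ^ (1/s)) ^ (s/(s-1))) '' interior C)

/-- The polar transform of a function on the dual cone, yielding a function on `V`. -/
noncomputable def polar2 (C : Set V) (s : ℝ) (g : (V →L[ℝ] ℝ) → ℝ) (v : V) : ℝ :=
  sInf ((fun w : V →L[ℝ] ℝ => (w v / g w ^ ((s-1)/s)) ^ s) '' interior (dualCone C))

set_option maxHeartbeats 1000000 in
theorem double_polar_eq
    (C : Set V) (hCcl : IsClosed C) (hCcv : Convex ℝ C)
    (hCcone : ∀ v ∈ C, ∀ t : ℝ, 0 ≤ t → t • v ∈ C)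
    (hCproper : ∀ v ∈ C, -v ∈ C → v = 0)
    (hCfull : (interior C).Nonempty)
    (s : ℝ) (hs : 1 < s) (f : V → ℝ)
    (hfusc : UpperSemicontinuousOn f C)
    (hf0 : ∀ v ∈ C, 0 ≤ f v)
    (hfhom : ∀ t : ℝ, 0 ≤ t → ∀ v ∈ C, f (t • v) = t ^ s * f v)
    (hfpos : ∀ v ∈ interior C, 0 < f v)
    (hfconc : ∀ v ∈ C, ∀ x ∈ C, f v ^ (1/s) + f x ^ (1/s) ≤ f (v + x) ^ (1/s)) :
    ∀ v ∈ C, polar2 C s (polar C s f) v = f v := by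
  -- ## Basic setup
  obtain ⟨x₀, hx₀⟩ := hCfull
  have hCfull' : (interior C).Nonempty := ⟨x₀, hx₀⟩
  have hx₀C : x₀ ∈ C := interior_subset hx₀
  have hs0 : (0:ℝ) < s := by linarith
  have hs1 : (0:ℝ) < s - 1 := by linarith
  have h0C : (0:V) ∈ C := by simpa using hCcone x₀ hx₀C 0 le_rfl
  have hf00 : f 0 = 0 := by
    have h := hfhom 0 le_rfl 0 h0C
    rw [smul_zero, Real.zero_rpow hs0.ne'] at h
    linarith
  have hCadd : ∀ a ∈ C, ∀ b ∈ C, a + b ∈ C := by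
    intro a ha b hb
    have h1 : (1/2 : ℝ) • a + (1/2 : ℝ) • b ∈ C :=
      hCcv ha hb (by norm_num) (by norm_num) (by norm_num)
    have h2 := hCcone _ h1 2 (by norm_num)
    rw [smul_add, smul_smul, smul_smul] at h2
    norm_num at h2
    exact h2
  set D := dualCone C with hD
  have hDadd : ∀ a ∈ D, ∀ b ∈ D, a + b ∈ D := by
    intro a ha b hb x hx
    have h1 := ha x hx; have h2 := hb x hx
    simp only [ContinuousLinearMap.add_apply]; linarith
  have hDcone : ∀ a ∈ D, ∀ t : ℝ, 0 ≤ t → t • a ∈ D := by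
    intro a ha t ht x hx
    simp only [ContinuousLinearMap.coe_smul', Pi.smul_apply, smul_eq_mul]
    exact mul_nonneg ht (ha x hx)
  obtain ⟨w₀, hw₀⟩ := aux_dual_int_nonempty C hCcl hCcv hCcone hCproper h0C
  have hw₀D : w₀ ∈ D := interior_subset hw₀
  -- ## the function g = f^{1/s}
  set Ψ : ℝ → ℝ := fun y => max y 0 ^ (1/s) with hΨ
  have hΨmono : Monotone Ψ := fun a b hab =>
    Real.rpow_le_rpow (le_max_right a 0) (max_le_max hab le_rfl) (by positivity)
  have hΨcont : Continuous Ψ :=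
    (continuous_id.max continuous_const).rpow_const fun x => Or.inr (by positivity)
  set g : V → ℝ := fun x => Ψ (f x) with hgdef
  have hgC : ∀ x ∈ C, g x = f x ^ (1/s) := by
    intro x hx
    simp only [hgdef, hΨ, max_eq_left (hf0 x hx)]
  have hgnn : ∀ x, 0 ≤ g x := fun x => Real.rpow_nonneg (le_max_right _ _) _
  have hg0 : g 0 = 0 := by
    rw [hgC 0 h0C, hf00, Real.zero_rpow (by positivity)]
  have hgsuper : ∀ v ∈ C, ∀ x ∈ C, g v + g x ≤ g (v + x) := by
    intro v hv x hx
    rw [hgC v hv, hgC x hx, hgC _ (hCadd v hv x hx)]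
    exact hfconc v hv x hx
  have hghom : ∀ t : ℝ, 0 ≤ t → ∀ x ∈ C, g (t • x) = t * g x := by
    intro t ht x hx
    rw [hgC _ (hCcone x hx t ht), hgC x hx, hfhom t ht x hx,
      Real.mul_rpow (Real.rpow_nonneg ht _) (hf0 x hx), ← Real.rpow_mul ht,
      mul_one_div_cancel hs0.ne', Real.rpow_one]
  have hgpos : ∀ v ∈ interior C, 0 < g v := by
    intro v hv
    rw [hgC v (interior_subset hv)]
    exact Real.rpow_pos_of_pos (hfpos v hv) _
  have husc : UpperSemicontinuousOn g C :=
    hΨcont.comp_upperSemicontinuousOn hfusc hΨmono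
  -- ## upper bound for g : g ≤ M ‖·‖
  obtain ⟨r, hr, hball⟩ := Metric.mem_nhds_iff.mp (mem_interior_iff_mem_nhds.mp hx₀)
  have hgx₀ : 0 < g x₀ := hgpos x₀ hx₀
  set M := 2 * g x₀ / r with hM
  have hMpos : 0 < M := by positivity
  have hgM : ∀ v ∈ C, g v ≤ M * ‖v‖ := by
    intro v hv
    rcases eq_or_ne v 0 with rfl | hv0
    · simp [hg0]
    · have hnv : 0 < ‖v‖ := norm_pos_iff.mpr hv0
      set ε := r / (2 * ‖v‖) with hε
      have hεpos : 0 < ε := by positivity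
      have h1 : x₀ + ε • v ∈ C := hCadd _ hx₀C _ (hCcone v hv ε hεpos.le)
      have h2 : x₀ - ε • v ∈ C := by
        apply hball
        simp only [Metric.mem_ball, dist_eq_norm]
        have he : x₀ - ε • v - x₀ = -(ε • v) := by abel
        rw [he, norm_neg, norm_smul, Real.norm_eq_abs, abs_of_pos hεpos, hε]
        have : r / (2 * ‖v‖) * ‖v‖ = r / 2 := by field_simp
        rw [this]; linarith
      have hcomb : (1/2 : ℝ) • (x₀ + ε • v) + (1/2 : ℝ) • (x₀ - ε • v) = x₀ := by
        rw [smul_add, smul_sub]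
        module
      have h3 : (1/2:ℝ) * g (x₀ + ε • v) + (1/2:ℝ) * g (x₀ - ε • v) ≤ g x₀ := by
        have hh := hgsuper ((1/2:ℝ) • (x₀ + ε • v)) (hCcone _ h1 _ (by norm_num))
          ((1/2:ℝ) • (x₀ - ε • v)) (hCcone _ h2 _ (by norm_num))
        rw [hghom (1/2) (by norm_num) _ h1, hghom (1/2) (by norm_num) _ h2, hcomb] at hh
        exact hh
      have h4 : g x₀ + ε * g v ≤ g (x₀ + ε • v) := by
        have hh := hgsuper x₀ hx₀C (ε • v) (hCcone v hv ε hεpos.le)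
        rw [hghom ε hεpos.le v hv] at hh
        exact hh
      have h5 : ε * g v ≤ g x₀ := by
        have := hgnn (x₀ - ε • v)
        nlinarith
      rw [hε] at h5
      have h6 : g v * (r / (2 * ‖v‖)) ≤ g x₀ := by linarith [mul_comm (g v) (r / (2 * ‖v‖))]
      have h7 : g v ≤ g x₀ / (r / (2 * ‖v‖)) := (le_div_iff₀ (by positivity)).mpr h6
      calc g v ≤ g x₀ / (r / (2 * ‖v‖)) := h7
      _ = M * ‖v‖ := by rw [hM]; field_simp
  -- ## uniform positivity on the dual cone interior
  have hDlow : ∀ w ∈ interior D, ∃ c : ℝ, 0 < c ∧ ∀ v ∈ C, c * ‖v‖ ≤ w v := by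
    intro w hw
    obtain ⟨ρ, hρ, hbw⟩ := Metric.mem_nhds_iff.mp (mem_interior_iff_mem_nhds.mp hw)
    refine ⟨ρ/2, by positivity, ?_⟩
    intro v hv
    rcases eq_or_ne v 0 with rfl | hv0
    · simp
    obtain ⟨u, hu1, hu2⟩ := exists_dual_vector ℝ v (norm_ne_zero_iff.mpr hv0)
    have hmem : w - (ρ/2) • u ∈ D := by
      apply hbw
      simp only [Metric.mem_ball, dist_eq_norm]
      have he : w - (ρ/2) • u - w = -((ρ/2) • u) := by abel
      rw [he, norm_neg, norm_smul (ρ/2) u, Real.norm_eq_abs, abs_of_pos (by positivity), hu1, mul_one]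
      linarith
    have h1 := hmem v hv
    simp only [ContinuousLinearMap.sub_apply, ContinuousLinearMap.coe_smul', Pi.smul_apply,
      smul_eq_mul] at h1
    have h2 : u v = ‖v‖ := by exact_mod_cast hu2
    rw [h2] at h1
    linarith
  -- ## the 1-homogeneous polar N
  set N : (V →L[ℝ] ℝ) → ℝ := fun w => sInf ((fun v => w v / g v) '' interior C) with hN
  have hNbdd : ∀ w ∈ interior D, ∃ c, 0 < c ∧
      ∀ y ∈ (fun v => w v / g v) '' interior C, c ≤ y := by
    intro w hw
    obtain ⟨c, hc, hcw⟩ := hDlow w hw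
    refine ⟨c / M, by positivity, ?_⟩
    rintro y ⟨v, hv, rfl⟩
    have hvC := interior_subset hv
    have hgv : 0 < g v := hgpos v hv
    rw [le_div_iff₀ hgv]
    calc c / M * g v ≤ c / M * (M * ‖v‖) :=
          mul_le_mul_of_nonneg_left (hgM v hvC) (by positivity)
    _ = c * ‖v‖ := by field_simp
    _ ≤ w v := hcw v hvC
  have hNbddBelow : ∀ w ∈ interior D, BddBelow ((fun v => w v / g v) '' interior C) := by
    intro w hw
    obtain ⟨c, _, hcy⟩ := hNbdd w hw
    exact ⟨c, hcy⟩
  have hNpos : ∀ w ∈ interior D, 0 < N w := by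
    intro w hw
    obtain ⟨c, hc, hcy⟩ := hNbdd w hw
    have : c ≤ N w := le_csInf (hCfull'.image _) hcy
    linarith
  have hNle : ∀ w ∈ interior D, ∀ v ∈ interior C, N w ≤ w v / g v := fun w hw v hv =>
    csInf_le (hNbddBelow w hw) ⟨v, hv, rfl⟩
  have hNdom : ∀ w ∈ interior D, ∀ v ∈ C, N w * g v ≤ w v := by
    intro w hw v hv
    have hwD' : w ∈ D := interior_subset hw
    have key : ∀ ε : ℝ, 0 < ε → N w * g v ≤ w v + ε * w x₀ := by
      intro ε hε
      have hεx : ε • x₀ ∈ interior C := aux_smul_interior hCcone hε hx₀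
      have hvi : ε • x₀ + v ∈ interior C := aux_add_interior hCadd hεx hv
      have hgi : 0 < g (ε • x₀ + v) := hgpos _ hvi
      have h1 : N w * g (ε • x₀ + v) ≤ w (ε • x₀ + v) := by
        have hh := hNle w hw _ hvi
        rw [le_div_iff₀ hgi] at hh
        linarith [mul_comm (N w) (g (ε • x₀ + v))]
      have h2 : ε * g x₀ + g v ≤ g (ε • x₀ + v) := by
        have hh := hgsuper (ε • x₀) (hCcone _ hx₀C ε hε.le) v hv
        rw [hghom ε hε.le x₀ hx₀C] at hh
        exact hh
      have h3 : N w * g v ≤ N w * g (ε • x₀ + v) := by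
        apply mul_le_mul_of_nonneg_left _ (hNpos w hw).le
        have := hgnn x₀
        nlinarith
      have h4 : w (ε • x₀ + v) = ε * w x₀ + w v := by
        rw [map_add, map_smul]; simp [smul_eq_mul]
      linarith
    by_contra hcon; push_neg at hcon
    set δ := N w * g v - w v with hδ
    have hδpos : 0 < δ := by simp only [hδ]; linarith
    have hwx₀ : 0 ≤ w x₀ := hwD' x₀ hx₀C
    have hεpos : 0 < δ / (2 * (w x₀ + 1)) := by positivity
    have hk := key _ hεpos
    have h5 : δ / (2 * (w x₀ + 1)) * w x₀ ≤ δ / 2 := by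
      rw [div_mul_eq_mul_div, div_le_div_iff₀ (by positivity) two_pos]
      nlinarith
    simp only [hδ] at h5 hk
    linarith
  -- ## polar f = N ^ p
  set p := s / (s-1) with hp
  have hppos : 0 < p := by rw [hp]; positivity
  set Φ : ℝ → ℝ := fun y => max y 0 ^ p with hΦ
  have hΦmono : Monotone Φ := fun a b hab =>
    Real.rpow_le_rpow (le_max_right a 0) (max_le_max hab le_rfl) hppos.le
  have hΦcont : Continuous Φ :=
    (continuous_id.max continuous_const).rpow_const fun x => Or.inr hppos.le
  have hpolar : ∀ w ∈ interior D, polar C s f w = N w ^ p := by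
    intro w hw
    have hwD' : w ∈ D := interior_subset hw
    have himg : (fun v => (w v / f v ^ (1/s)) ^ p) '' interior C
        = Φ '' ((fun v => w v / g v) '' interior C) := by
      rw [image_image]
      apply image_congr
      intro v hv
      have hvC := interior_subset hv
      have h1 : 0 ≤ w v / g v := div_nonneg (hwD' v hvC) (hgnn v)
      simp only [hΦ]
      rw [max_eq_left h1, hgC v hvC]
    have hmap := hΦmono.map_csInf_of_continuousAt hΦcont.continuousAt
      (hCfull'.image (fun v => w v / g v)) (hNbddBelow w hw)
    simp only [polar, ← hp]
    rw [himg, ← hmap]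
    simp only [hΦ, ← hN, max_eq_left (hNpos w hw).le]
    exact congrArg (· ^ p) (max_eq_left (hNpos w hw).le)
  have hpolar2 : ∀ w ∈ interior D, polar C s f w ^ ((s-1)/s) = N w := by
    intro w hw
    rw [hpolar w hw, ← Real.rpow_mul (hNpos w hw).le]
    have h1 : p * ((s-1)/s) = 1 := by
      rw [hp]; field_simp
    rw [h1, Real.rpow_one]
  -- ## main goal
  intro v hv
  have hP2 : polar2 C s (polar C s f) v
      = sInf ((fun w : V →L[ℝ] ℝ => (w v / N w) ^ s) '' interior D) := by
    simp only [polar2, ← hD]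
    congr 1
    apply image_congr
    intro w hw
    rw [hpolar2 w hw]
  have hDIntNe : (interior D).Nonempty := ⟨w₀, hw₀⟩
  have hterm_nonneg : ∀ w ∈ interior D, 0 ≤ w v / N w := fun w hw =>
    div_nonneg (interior_subset hw v hv) (hNpos w hw).le
  have hbdd2 : BddBelow ((fun w : V →L[ℝ] ℝ => (w v / N w) ^ s) '' interior D) := by
    refine ⟨0, ?_⟩
    rintro y ⟨w, hw, rfl⟩
    exact Real.rpow_nonneg (hterm_nonneg w hw) s
  have hgvs : g v ^ s = f v := by
    rw [hgC v hv, ← Real.rpow_mul (hf0 v hv), one_div, inv_mul_cancel₀ hs0.ne', Real.rpow_one]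
  -- lower bound
  have hlow : f v ≤ polar2 C s (polar C s f) v := by
    rw [hP2]
    apply le_csInf (hDIntNe.image _)
    rintro y ⟨w, hw, rfl⟩
    have h1 : g v ≤ w v / N w := by
      rw [le_div_iff₀ (hNpos w hw)]
      have := hNdom w hw v hv
      linarith [mul_comm (g v) (N w)]
    calc f v = g v ^ s := hgvs.symm
    _ ≤ (w v / N w) ^ s := Real.rpow_le_rpow (hgnn v) h1 hs0.le
  -- upper bound
  have hupp : ∀ η : ℝ, 0 < η → polar2 C s (polar C s f) v ≤ (g v + η) ^ s := by
    intro η hη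
    -- the hypograph cone
    set K : Set (V × ℝ) := {q | q.1 ∈ C ∧ q.2 ≤ g q.1} with hK
    have hKcone : ∀ a ∈ K, ∀ t : ℝ, 0 ≤ t → t • a ∈ K := by
      rintro ⟨x, τ⟩ ⟨hx1, hx2⟩ t ht
      refine ⟨hCcone x hx1 t ht, ?_⟩
      show t * τ ≤ g (t • x)
      rw [hghom t ht x hx1]
      exact mul_le_mul_of_nonneg_left hx2 ht
    have hKcv : Convex ℝ K := by
      rintro ⟨x, τ⟩ ⟨hx1, hx2⟩ ⟨y, σ⟩ ⟨hy1, hy2⟩ a b ha hb hab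
      refine ⟨hCcv hx1 hy1 ha hb hab, ?_⟩
      show a * τ + b * σ ≤ g (a • x + b • y)
      have h1 := hgsuper (a • x) (hCcone x hx1 a ha) (b • y) (hCcone y hy1 b hb)
      rw [hghom a ha x hx1, hghom b hb y hy1] at h1
      nlinarith [mul_le_mul_of_nonneg_left hx2 ha, mul_le_mul_of_nonneg_left hy2 hb]
    have hKcl : IsClosed K := by
      apply IsSeqClosed.isClosed
      intro z q hz hzt
      obtain ⟨x, τ⟩ := q
      have hz1 : Filter.Tendsto (fun n => (z n).1) Filter.atTop (𝓝 x) :=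
        (continuous_fst.tendsto _).comp hzt
      have hz2 : Filter.Tendsto (fun n => (z n).2) Filter.atTop (𝓝 τ) :=
        (continuous_snd.tendsto _).comp hzt
      have hxC : x ∈ C := hCcl.mem_of_tendsto hz1
        (Filter.Eventually.of_forall fun n => (hz n).1)
      refine ⟨hxC, ?_⟩
      by_contra hcon; push_neg at hcon
      have hy1 : g x < (g x + τ)/2 := by linarith
      have hy2 : (g x + τ)/2 < τ := by linarith
      have hev := husc x hxC ((g x + τ)/2) hy1
      have htC : Filter.Tendsto (fun n => (z n).1) Filter.atTop (𝓝[C] x) :=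
        tendsto_nhdsWithin_iff.mpr ⟨hz1, Filter.Eventually.of_forall fun n => (hz n).1⟩
      have hev2 : ∀ᶠ n in Filter.atTop, g ((z n).1) < (g x + τ)/2 := htC.eventually hev
      have hτy : τ ≤ (g x + τ)/2 := le_of_tendsto hz2
        (hev2.mono fun n hn => le_of_lt (lt_of_le_of_lt (hz n).2 hn))
      linarith
    have hKne : (v, g v + η/2) ∉ K := by
      rintro ⟨-, h⟩
      simp only at h
      linarith
    obtain ⟨φ, u, hφK, hφv⟩ := geometric_hahn_banach_closed_point hKcv hKcl hKne
    have h0K : ((0:V), (0:ℝ)) ∈ K := ⟨h0C, by simp [hg0]⟩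
    have hu0 : 0 < u := by have := hφK _ h0K; rw [show ((0:V), (0:ℝ)) = 0 from rfl, map_zero] at this; exact this
    have hφnp := aux_cone_sep_nonpos hKcone hφK
    set c := φ (0, 1) with hc
    set w : V →L[ℝ] ℝ := φ.comp (ContinuousLinearMap.inl ℝ V ℝ) with hwdef
    have hφdec : ∀ (x : V) (t : ℝ), φ (x, t) = w x + t * c := by
      intro x t
      have he : (x, t) = ((x, 0) : V × ℝ) + t • ((0:V), (1:ℝ)) := by
        simp [Prod.ext_iff]
      rw [he, map_add, map_smul, smul_eq_mul]
      congr 1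
    have hcnn : 0 ≤ c := by
      have h1 : φ ((0:V), (-1:ℝ)) ≤ 0 := hφnp _ ⟨h0C, by simp [hg0]⟩
      rw [hφdec, map_zero] at h1
      linarith
    have hcpos : 0 < c := by
      rcases lt_or_eq_of_le hcnn with h | h
      · exact h
      · exfalso
        have h2 : φ (v, g v) ≤ 0 := hφnp _ ⟨hv, le_rfl⟩
        have h3 := hφv
        rw [hφdec] at h2 h3
        rw [← h] at h2 h3
        simp only [mul_zero, add_zero] at h2 h3
        linarith
    set w1 : V →L[ℝ] ℝ := (-(c⁻¹)) • w with hw1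
    have hw1x : ∀ x, w1 x = -(w x) / c := by
      intro x
      simp only [hw1, ContinuousLinearMap.coe_smul', Pi.smul_apply, smul_eq_mul]
      field_simp
    have hdom : ∀ x ∈ C, g x ≤ w1 x := by
      intro x hx
      have h1 := hφnp _ (⟨hx, le_rfl⟩ : (x, g x) ∈ K)
      rw [hφdec] at h1
      rw [hw1x, le_div_iff₀ hcpos]
      nlinarith
    have hvbound : w1 v < g v + η/2 := by
      have h3 := hφv
      rw [hφdec] at h3
      rw [hw1x, div_lt_iff₀ hcpos]
      nlinarith
    have hw1D : w1 ∈ D := fun x hx => le_trans (hgnn x) (hdom x hx)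
    have hw₀v : 0 ≤ w₀ v := hw₀D v hv
    have hεpos : 0 < η / (2 * (w₀ v + 1)) := by positivity
    set ε := η / (2 * (w₀ v + 1)) with hεe
    have hεw₀ : ε * w₀ v ≤ η/2 := by
      rw [hεe, div_mul_eq_mul_div, div_le_div_iff₀ (by positivity) two_pos]
      nlinarith
    set wε : V →L[ℝ] ℝ := ε • w₀ + w1 with hwε
    have hwεint : wε ∈ interior D :=
      aux_add_interior hDadd (aux_smul_interior hDcone hεpos hw₀) hw1D
    have hwεx : ∀ x, wε x = ε * w₀ x + w1 x := by
      intro x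
      simp only [hwε, ContinuousLinearMap.add_apply, ContinuousLinearMap.coe_smul',
        Pi.smul_apply, smul_eq_mul]
    have hwεv : wε v ≤ g v + η := by
      rw [hwεx]
      linarith
    have hN1 : 1 ≤ N wε := by
      apply le_csInf (hCfull'.image _)
      rintro y ⟨x, hx, rfl⟩
      have hxC := interior_subset hx
      have hgx : 0 < g x := hgpos x hx
      rw [le_div_iff₀ hgx, one_mul]
      have h1 : g x ≤ w1 x := hdom x hxC
      have h2 : 0 ≤ ε * w₀ x := mul_nonneg hεpos.le (hw₀D x hxC)
      rw [hwεx]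
      linarith
    have hterm : (wε v / N wε) ^ s ≤ (g v + η) ^ s := by
      apply Real.rpow_le_rpow (hterm_nonneg wε hwεint) _ hs0.le
      calc wε v / N wε ≤ wε v := div_le_self (interior_subset hwεint v hv) hN1
      _ ≤ g v + η := hwεv
    rw [hP2]
    calc sInf ((fun w : V →L[ℝ] ℝ => (w v / N w) ^ s) '' interior D)
        ≤ (wε v / N wε) ^ s := csInf_le hbdd2 ⟨wε, hwεint, rfl⟩
    _ ≤ (g v + η) ^ s := hterm
  -- ## pass to the limit
  have hle : polar2 C s (polar C s f) v ≤ f v := by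
    have htend : Filter.Tendsto (fun η : ℝ => (g v + η) ^ s) (𝓝[>] 0) (𝓝 (f v)) := by
      rw [← hgvs]
      have hc : ContinuousAt (fun y : ℝ => y ^ s) (g v) :=
        Real.continuousAt_rpow_const _ _ (Or.inr hs0.le)
      have h2 : Filter.Tendsto (fun η : ℝ => g v + η) (𝓝[>] 0) (𝓝 (g v)) := by
        have h3 : Filter.Tendsto (fun η : ℝ => g v + η) (𝓝 0) (𝓝 (g v + 0)) :=
          (continuous_const.add continuous_id).tendsto 0
        rw [add_zero] at h3
        exact h3.mono_left nhdsWithin_le_nhds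
      exact hc.tendsto.comp h2
    refine ge_of_tendsto htend ?_
    filter_upwards [self_mem_nhdsWithin] with η hη
    exact hupp η hη
  linarith
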